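/- Let n ≥ 2 and let d be an integer with 1 ≤ d ≤ n − 1. Let L ⊆ Sⁿ be a linear subspace with L ∩ Sⁿ₊₊ ≠ ∅ whose dimension m satisfies m ≥ dn − d(d−1)/2 − n + d + 1. Then L contains a nonzero PSD matrix of rank at most n − d. -/

import Mathlib

open Matrix Module
open Matrix Module

namespace Stmt2Aux

/-- The submodule of symmetric matrices. -/
def symmSub (n : ℕ) : Submodule ℝ (Matrix (Fin n) (Fin n) ℝ) where
  carrier := {A | A.IsSymm}
  add_mem' := fun ha hb => ha.add hb
  zero_mem' := isSymm_zero
  smul_mem' := fun c _ hA => hA.smul c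

lemma mem_symmSub {n : ℕ} {A : Matrix (Fin n) (Fin n) ℝ} : A ∈ symmSub n ↔ A.IsSymm := Iff.rfl

abbrev pairs (k : ℕ) := {p : Fin k × Fin k // p.1 ≤ p.2}

lemma card_pairs (k : ℕ) : Fintype.card (pairs k) = k * (k + 1) / 2 := by
  rw [← Fintype.card_congr (Sym2.sortEquiv (α := Fin k)), Sym2.card]
  simp [Nat.choose_two_right, Nat.mul_comm]

/-- The basis family for symmetric matrices. -/
noncomputable def symFam (k : ℕ) : pairs k → Matrix (Fin k) (Fin k) ℝ :=
  fun p => Matrix.single p.1.1 p.1.2 (1:ℝ) + Matrix.single p.1.2 p.1.1 1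

lemma li_symFam (k : ℕ) : LinearIndependent ℝ (symFam k) := by
  rw [Fintype.linearIndependent_iff]
  intro g hg p
  have h := congrFun (congrFun hg p.1.1) p.1.2
  rw [Matrix.sum_apply, Matrix.zero_apply] at h
  rw [Finset.sum_eq_single p] at h
  · simp only [symFam, Matrix.smul_apply, Matrix.add_apply, Matrix.single, of_apply,
      smul_eq_mul] at h
    rcases eq_or_ne p.1.1 p.1.2 with he | he
    · simp [he] at h; linarith
    · simp [he, Ne.symm he] at h; linarith
  · intro q _ hq
    simp only [symFam, Matrix.smul_apply, Matrix.add_apply, Matrix.single, of_apply,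
      smul_eq_mul]
    have h1 : ¬(q.1.1 = p.1.1 ∧ q.1.2 = p.1.2) := by
      rintro ⟨h1, h2⟩; exact hq (Subtype.ext (Prod.ext h1 h2))
    have h2 : ¬(q.1.2 = p.1.1 ∧ q.1.1 = p.1.2) := by
      rintro ⟨h1, h2⟩
      have hle : p.1.2 ≤ p.1.1 := by rw [← h1, ← h2]; exact q.2
      have heq : p.1.1 = p.1.2 := le_antisymm p.2 hle
      exact hq (Subtype.ext (Prod.ext (h2.trans heq.symm) (h1.trans heq)))
    simp [h1, h2]
  · intro hp; exact absurd (Finset.mem_univ p) hp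

lemma symmSub_le_span (k : ℕ) :
    symmSub k ≤ Submodule.span ℝ (Set.range (symFam k)) := by
  intro A hA
  have hA' : ∀ i j, A j i = A i j := Matrix.IsSymm.ext_iff.1 hA
  have hrepr : A = ∑ p : Fin k × Fin k,
      if hp : p.1 ≤ p.2 then
        (if p.1 = p.2 then A p.1 p.2 / 2 else A p.1 p.2) • (symFam k ⟨p, hp⟩)
      else 0 := by
    ext a b
    rw [Matrix.sum_apply]
    rcases lt_trichotomy a b with hab | hab | hab
    · rw [Finset.sum_eq_single (a, b)]
      · simp [symFam, Matrix.single, hab.le, hab.ne, hab.ne']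
      · rintro ⟨q1, q2⟩ _ hq
        by_cases hle : q1 ≤ q2
        · simp only [dif_pos hle, symFam, Matrix.smul_apply, Matrix.add_apply,
            Matrix.single, of_apply, smul_eq_mul]
          have h1 : ¬(q1 = a ∧ q2 = b) := by rintro ⟨rfl, rfl⟩; exact hq rfl
          have h2 : ¬(q2 = a ∧ q1 = b) := by
            rintro ⟨rfl, rfl⟩; exact absurd hle (not_le.2 hab)
          simp [h1, h2]
        · simp [hle]
      · intro hmem; exact absurd (Finset.mem_univ _) hmem
    · subst hab
      rw [Finset.sum_eq_single (a, a)]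
      · simp [symFam, Matrix.single]; ring
      · rintro ⟨q1, q2⟩ _ hq
        by_cases hle : q1 ≤ q2
        · have h1 : ¬(q1 = a ∧ q2 = a) := by rintro ⟨rfl, rfl⟩; exact hq rfl
          have h2 : ¬(q2 = a ∧ q1 = a) := by rintro ⟨rfl, rfl⟩; exact hq rfl
          simp [symFam, Matrix.single, h1, h2, hle]
        · simp [hle]
      · intro hmem; exact absurd (Finset.mem_univ _) hmem
    · rw [Finset.sum_eq_single (b, a)]
      · simp [symFam, Matrix.single, hab.le, hab.ne, hab.ne', hA' a b]
      · rintro ⟨q1, q2⟩ _ hq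
        by_cases hle : q1 ≤ q2
        · have h1 : ¬(q1 = a ∧ q2 = b) := by
            rintro ⟨rfl, rfl⟩; exact absurd hle (not_le.2 hab)
          have h2 : ¬(q2 = a ∧ q1 = b) := by rintro ⟨rfl, rfl⟩; exact hq rfl
          simp [symFam, Matrix.single, h1, h2, hle]
        · simp [hle]
      · intro hmem; exact absurd (Finset.mem_univ _) hmem
  rw [hrepr]
  refine Submodule.sum_mem _ fun p _ => ?_
  by_cases hp : p.1 ≤ p.2
  · rw [dif_pos hp]
    exact Submodule.smul_mem _ _ (Submodule.subset_span ⟨⟨p, hp⟩, rfl⟩)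
  · rw [dif_neg hp]; exact Submodule.zero_mem _

lemma finrank_symmSub_le (k : ℕ) : finrank ℝ (symmSub k) ≤ k * (k + 1) / 2 := by
  calc finrank ℝ (symmSub k) ≤ finrank ℝ (Submodule.span ℝ (Set.range (symFam k))) :=
        Submodule.finrank_mono (symmSub_le_span k)
    _ ≤ (Set.range (symFam k)).toFinset.card := finrank_span_le_card _
    _ ≤ Fintype.card (pairs k) := by
        rw [Set.toFinset_range]; exact (Finset.card_image_le).trans (by simp)
    _ = k * (k + 1) / 2 := card_pairs k




variable {n r : ℕ}

lemma exists_left_inverse (V : Matrix (Fin n) (Fin r) ℝ)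
    (hV : ∀ x, V *ᵥ x = 0 → x = 0) : ∃ V' : Matrix (Fin r) (Fin n) ℝ, V' * V = 1 := by
  have hquad : ∀ x, x ⬝ᵥ (Vᵀ * V) *ᵥ x = (V *ᵥ x) ⬝ᵥ (V *ᵥ x) := by
    intro x
    rw [← Matrix.mulVec_mulVec, Matrix.dotProduct_mulVec, Matrix.vecMul_transpose]
  have hG : (Vᵀ * V).PosDef := by
    apply Matrix.PosDef.of_dotProduct_mulVec_pos
    · rw [Matrix.IsHermitian, conjTranspose_eq_transpose_of_trivial,
        Matrix.transpose_mul, Matrix.transpose_transpose]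
    · intro x hx
      have h1 : (V *ᵥ x) ⬝ᵥ (V *ᵥ x) ≠ 0 := fun h =>
        hx (hV x (dotProduct_self_eq_zero.1 h))
      have h2 : 0 ≤ (V *ᵥ x) ⬝ᵥ (V *ᵥ x) :=
        Finset.sum_nonneg fun i _ => mul_self_nonneg _
      simpa [hquad] using lt_of_le_of_ne h2 (Ne.symm h1)
  have hdet : IsUnit (Vᵀ * V).det := isUnit_iff_ne_zero.2 hG.det_pos.ne'
  exact ⟨(Vᵀ * V)⁻¹ * Vᵀ, by rw [Matrix.mul_assoc, Matrix.nonsing_inv_mul _ hdet]⟩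

/-- conjugation M ↦ V M Vᵀ as a linear map -/
def conjMap (V : Matrix (Fin n) (Fin r) ℝ) :
    Matrix (Fin r) (Fin r) ℝ →ₗ[ℝ] Matrix (Fin n) (Fin n) ℝ where
  toFun M := V * M * Vᵀ
  map_add' A B := by simp only [Matrix.mul_add, Matrix.add_mul]
  map_smul' c A := by simp only [Matrix.mul_smul, Matrix.smul_mul, RingHom.id_apply]

lemma conjMap_ker (V : Matrix (Fin n) (Fin r) ℝ)
    (hV : ∀ x, V *ᵥ x = 0 → x = 0) : LinearMap.ker (conjMap V) = ⊥ := by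
  obtain ⟨V', hV'⟩ := exists_left_inverse V hV
  rw [LinearMap.ker_eq_bot]
  intro A B hAB
  have hVt : Vᵀ * V'ᵀ = 1 := by rw [← Matrix.transpose_mul, hV', Matrix.transpose_one]
  have key : ∀ M : Matrix (Fin r) (Fin r) ℝ, V' * (V * M * Vᵀ) * V'ᵀ = M := by
    intro M
    calc V' * (V * M * Vᵀ) * V'ᵀ = (V' * V) * M * (Vᵀ * V'ᵀ) := by
          simp only [Matrix.mul_assoc]
      _ = M := by rw [hV', hVt, Matrix.one_mul, Matrix.mul_one]
  have : V' * (V * A * Vᵀ) * V'ᵀ = V' * (V * B * Vᵀ) * V'ᵀ := by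
    simp only [conjMap, LinearMap.coe_mk, AddHom.coe_mk] at hAB
    rw [hAB]
  rwa [key, key] at this

/-- The core rank-reduction computation. -/
lemma reduce (S B : Matrix (Fin n) (Fin n) ℝ)
    (hS : S.PosSemidef) (hSsymm : Sᵀ = S) (hB : Bᵀ = B)
    (w₀ u₀ : Fin n → ℝ) (hu₀ : S *ᵥ u₀ = w₀) (hw₀n : w₀ ⬝ᵥ w₀ = 1)
    (lam : ℝ) (hlam : 0 < lam)
    (hmax : ∀ u : Fin n → ℝ, (S *ᵥ u) ⬝ᵥ (B *ᵥ (S *ᵥ u)) ≤ lam * ((S *ᵥ u) ⬝ᵥ (S *ᵥ u)))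
    (hw₀B : w₀ ⬝ᵥ (B *ᵥ w₀) = lam) :
    (S * S - lam⁻¹ • (S * B * S)).PosSemidef ∧
      LinearMap.ker (S * S).mulVecLin < LinearMap.ker (S * S - lam⁻¹ • (S * B * S)).mulVecLin := by
  set t : ℝ := lam⁻¹ with ht
  have htpos : 0 < t := inv_pos.2 hlam
  have htlam : t * lam = 1 := inv_mul_cancel₀ hlam.ne'
  have hdotS : ∀ x z : Fin n → ℝ, x ⬝ᵥ (S *ᵥ z) = (S *ᵥ x) ⬝ᵥ z := by
    intro x z
    rw [Matrix.dotProduct_mulVec]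
    congr 1
    conv_lhs => rw [← hSsymm]
    rw [Matrix.vecMul_transpose]
  have hdotB : ∀ x z : Fin n → ℝ, x ⬝ᵥ (B *ᵥ z) = (B *ᵥ x) ⬝ᵥ z := by
    intro x z
    rw [Matrix.dotProduct_mulVec]
    congr 1
    conv_lhs => rw [← hB]
    rw [Matrix.vecMul_transpose]
  -- quadratic form of X'
  have hquad : ∀ u : Fin n → ℝ, u ⬝ᵥ ((S * S - t • (S * B * S)) *ᵥ u)
      = (S *ᵥ u) ⬝ᵥ (S *ᵥ u) - t * ((S *ᵥ u) ⬝ᵥ (B *ᵥ (S *ᵥ u))) := by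
    intro u
    rw [Matrix.sub_mulVec, Matrix.smul_mulVec, dotProduct_sub, dotProduct_smul,
      smul_eq_mul]
    congr 1
    · rw [← Matrix.mulVec_mulVec, hdotS]
    · congr 1
      have : (S * B * S) *ᵥ u = S *ᵥ (B *ᵥ (S *ᵥ u)) := by
        rw [Matrix.mulVec_mulVec, Matrix.mulVec_mulVec]
      rw [this, hdotS]
  have hFnonneg : ∀ u : Fin n → ℝ,
      0 ≤ (S *ᵥ u) ⬝ᵥ (S *ᵥ u) - t * ((S *ᵥ u) ⬝ᵥ (B *ᵥ (S *ᵥ u))) := by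
    intro u
    have h1 := hmax u
    have h2 : t * ((S *ᵥ u) ⬝ᵥ (B *ᵥ (S *ᵥ u))) ≤ t * (lam * ((S *ᵥ u) ⬝ᵥ (S *ᵥ u))) :=
      mul_le_mul_of_nonneg_left h1 htpos.le
    have h3 : t * (lam * ((S *ᵥ u) ⬝ᵥ (S *ᵥ u))) = (S *ᵥ u) ⬝ᵥ (S *ᵥ u) := by
      rw [← mul_assoc, htlam, one_mul]
    linarith
  have hpsd : (S * S - t • (S * B * S)).PosSemidef := by
    apply Matrix.PosSemidef.of_dotProduct_mulVec_nonneg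
    · rw [Matrix.IsHermitian, conjTranspose_eq_transpose_of_trivial]
      simp only [Matrix.transpose_sub, Matrix.transpose_smul, Matrix.transpose_mul,
        hSsymm, hB, Matrix.mul_assoc]
    · intro x
      have hx : star x = x := by simp
      rw [hx, hquad]
      exact hFnonneg x
  refine ⟨hpsd, ?_⟩
  -- kernel inclusion
  have hker_le : LinearMap.ker (S * S).mulVecLin
      ≤ LinearMap.ker (S * S - t • (S * B * S)).mulVecLin := by
    intro u hu
    rw [LinearMap.mem_ker, mulVecLin_apply] at hu ⊢
    have hSu : S *ᵥ u = 0 := by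
      have h1 : (S *ᵥ u) ⬝ᵥ (S *ᵥ u) = 0 := by
        rw [← hdotS, Matrix.mulVec_mulVec, hu, dotProduct_zero]
      exact dotProduct_self_eq_zero.1 h1
    rw [Matrix.sub_mulVec, Matrix.smul_mulVec]
    have h2 : (S * B * S) *ᵥ u = 0 := by
      rw [← Matrix.mulVec_mulVec, hSu, Matrix.mulVec_zero]
    rw [hu, h2, smul_zero, sub_zero]
  -- the new kernel vector
  have hXu₀ : (S * S) *ᵥ u₀ = S *ᵥ w₀ := by rw [← Matrix.mulVec_mulVec, hu₀]
  have hXu₀ne : (S * S) *ᵥ u₀ ≠ 0 := by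
    rw [hXu₀]
    intro h
    have h1 : w₀ ⬝ᵥ w₀ = u₀ ⬝ᵥ (S *ᵥ w₀) := by rw [hdotS, hu₀]
    rw [h, dotProduct_zero, hw₀n] at h1
    exact one_ne_zero h1
  -- orthogonality of z to the range of S
  set z : Fin n → ℝ := w₀ - t • (B *ᵥ w₀) with hz
  have horth : ∀ a : Fin n → ℝ, (S *ᵥ a) ⬝ᵥ z = 0 := by
    intro a
    set p : Fin n → ℝ := S *ᵥ a with hp
    set q : ℝ := p ⬝ᵥ z with hq
    by_contra hq0
    have expand : ∀ s : ℝ,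
        (p + s • w₀) ⬝ᵥ (p + s • w₀) - t * ((p + s • w₀) ⬝ᵥ (B *ᵥ (p + s • w₀)))
          = (p ⬝ᵥ p - t * (p ⬝ᵥ (B *ᵥ p))) + 2 * s * q := by
      intro s
      have h1 : w₀ ⬝ᵥ p = p ⬝ᵥ w₀ := dotProduct_comm _ _
      have h2 : w₀ ⬝ᵥ (B *ᵥ p) = p ⬝ᵥ (B *ᵥ w₀) := by
        rw [hdotB, dotProduct_comm]
      have hq' : q = p ⬝ᵥ w₀ - t * (p ⬝ᵥ (B *ᵥ w₀)) := by
        rw [hq, hz, dotProduct_sub, dotProduct_smul, smul_eq_mul]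
      rw [hq']
      simp only [Matrix.mulVec_add, Matrix.mulVec_smul, dotProduct_add, add_dotProduct,
        dotProduct_smul, smul_dotProduct, smul_eq_mul]
      rw [h1, h2, hw₀n, hw₀B]
      linear_combination (-(s^2)) * htlam
    have hnn : ∀ s : ℝ, 0 ≤ (p ⬝ᵥ p - t * (p ⬝ᵥ (B *ᵥ p))) + 2 * s * q := by
      intro s
      have h := hFnonneg (a + s • u₀)
      have hSas : S *ᵥ (a + s • u₀) = p + s • w₀ := by
        rw [Matrix.mulVec_add, Matrix.mulVec_smul, hu₀, hp]
      rw [hSas] at h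
      rw [← expand s]
      exact h
    set c : ℝ := p ⬝ᵥ p - t * (p ⬝ᵥ (B *ᵥ p)) with hc
    have hthis := hnn (-(c + 1) / (2 * q))
    have hs : 2 * (-(c + 1) / (2 * q)) * q = -(c + 1) := by
      field_simp
    rw [hs] at hthis
    linarith
  have hXpu₀ : (S * S - t • (S * B * S)) *ᵥ u₀ = S *ᵥ z := by
    rw [Matrix.sub_mulVec, Matrix.smul_mulVec, hXu₀]
    have h3 : (S * B * S) *ᵥ u₀ = S *ᵥ (B *ᵥ w₀) := by
      rw [show S * B * S = S * (B * S) from Matrix.mul_assoc S B S, ← Matrix.mulVec_mulVec,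
        ← Matrix.mulVec_mulVec, hu₀]
    rw [h3, hz, Matrix.mulVec_sub, Matrix.mulVec_smul]
  have hSz : S *ᵥ z = 0 := by
    have h1 : (S *ᵥ z) ⬝ᵥ (S *ᵥ z) = 0 := by
      rw [← hdotS]
      rw [dotProduct_comm]
      exact horth (S *ᵥ z)
    exact dotProduct_self_eq_zero.1 h1
  refine lt_of_le_of_ne hker_le fun heq => ?_
  have hu₀mem : u₀ ∈ LinearMap.ker (S * S - t • (S * B * S)).mulVecLin := by
    rw [LinearMap.mem_ker, mulVecLin_apply, hXpu₀, hSz]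
  rw [← heq, LinearMap.mem_ker, mulVecLin_apply] at hu₀mem
  exact hXu₀ne hu₀mem


-- continuing namespace Stmt2Aux
lemma dot_symm {n : ℕ} {S : Matrix (Fin n) (Fin n) ℝ} (h : Sᵀ = S) (x z : Fin n → ℝ) :
    x ⬝ᵥ (S *ᵥ z) = (S *ᵥ x) ⬝ᵥ z := by
  rw [Matrix.dotProduct_mulVec]
  congr 1
  conv_lhs => rw [← h]
  rw [Matrix.vecMul_transpose]

lemma symFam_isSymm (k : ℕ) (p : pairs k) : (symFam k p).IsSymm := by
  refine Matrix.IsSymm.ext fun i j => ?_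
  simp only [symFam, Matrix.add_apply, Matrix.single, of_apply]
  rw [add_comm]
  congr 1 <;> exact if_congr and_comm rfl rfl

lemma dot_quad_continuous {n : ℕ} (M : Matrix (Fin n) (Fin n) ℝ) :
    Continuous fun w : Fin n → ℝ => w ⬝ᵥ (M *ᵥ w) := by
  simp only [dotProduct, Matrix.mulVec]
  exact continuous_finset_sum _ fun i _ => (continuous_apply i).mul
    (continuous_finset_sum _ fun j _ => continuous_const.mul (continuous_apply j))

lemma sphere_max {n : ℕ} (S B : Matrix (Fin n) (Fin n) ℝ) :
    (∀ u, (S *ᵥ u) ⬝ᵥ (B *ᵥ (S *ᵥ u)) ≤ 0) ∨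
    ∃ (w₁ : Fin n → ℝ) (lam : ℝ), (w₁ ∈ LinearMap.range S.mulVecLin) ∧ w₁ ⬝ᵥ w₁ = 1 ∧
      w₁ ⬝ᵥ (B *ᵥ w₁) = lam ∧ 0 < lam ∧
      ∀ u, (S *ᵥ u) ⬝ᵥ (B *ᵥ (S *ᵥ u)) ≤ lam * ((S *ᵥ u) ⬝ᵥ (S *ᵥ u)) := by
  classical
  by_cases hS0 : ∀ u, S *ᵥ u = 0
  · left; intro u; rw [hS0 u]; simp
  · push_neg at hS0
    obtain ⟨u', hu'⟩ := hS0
    set RS : Submodule ℝ (Fin n → ℝ) := LinearMap.range S.mulVecLin with hRS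
    set sph : Set (Fin n → ℝ) := {w | w ∈ RS ∧ w ⬝ᵥ w = 1} with hsph
    -- normalization helper
    have hnorm : ∀ w : Fin n → ℝ, w ∈ RS → w ≠ 0 →
        ∃ c : ℝ, 0 < c ∧ c * c = w ⬝ᵥ w ∧ (c⁻¹ • w) ∈ sph ∧
          (c⁻¹ • w) ⬝ᵥ (B *ᵥ (c⁻¹ • w)) = c⁻¹ * (c⁻¹ * (w ⬝ᵥ (B *ᵥ w))) := by
      intro w hw hw0
      have hwp : 0 < w ⬝ᵥ w := by
        rcases lt_or_eq_of_le (Finset.sum_nonneg fun i _ => mul_self_nonneg (w i) :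
          (0:ℝ) ≤ w ⬝ᵥ w) with h | h
        · exact h
        · exact absurd (dotProduct_self_eq_zero.1 h.symm) hw0
      refine ⟨Real.sqrt (w ⬝ᵥ w), Real.sqrt_pos.2 hwp, Real.mul_self_sqrt hwp.le, ?_, ?_⟩
      · constructor
        · exact Submodule.smul_mem RS _ hw
        · rw [dotProduct_smul, smul_dotProduct, smul_eq_mul, smul_eq_mul]
          have hc := Real.mul_self_sqrt hwp.le
          have hcne : Real.sqrt (w ⬝ᵥ w) ≠ 0 := (Real.sqrt_pos.2 hwp).ne'
          rw [← hc]
          field_simp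
          rw [Real.sqrt_sq (Real.sqrt_nonneg _)]
      · rw [Matrix.mulVec_smul, dotProduct_smul, smul_dotProduct, smul_eq_mul, smul_eq_mul]
    have hsphne : sph.Nonempty := by
      obtain ⟨c, _, _, hmem, _⟩ := hnorm (S *ᵥ u') ⟨u', rfl⟩ hu'
      exact ⟨_, hmem⟩
    have hclosed : IsClosed sph := by
      have h1 : IsClosed (RS : Set (Fin n → ℝ)) := Submodule.closed_of_finiteDimensional RS
      have h2 : IsClosed {w : Fin n → ℝ | w ⬝ᵥ w = 1} := by
        have : Continuous fun w : Fin n → ℝ => w ⬝ᵥ w := by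
          have := dot_quad_continuous (1 : Matrix (Fin n) (Fin n) ℝ)
          simpa [Matrix.one_mulVec] using this
        exact isClosed_eq this continuous_const
      exact h1.inter h2
    have hbounded : Bornology.IsBounded sph := by
      refine (Metric.isBounded_closedBall (x := (0 : Fin n → ℝ)) (r := 1)).subset ?_
      intro w hw
      rw [Metric.mem_closedBall, dist_zero_right]
      refine (pi_norm_le_iff_of_nonneg zero_le_one).2 fun i => ?_
      rw [Real.norm_eq_abs, abs_le]
      have hsum : w i * w i ≤ w ⬝ᵥ w := by
        refine Finset.single_le_sum (f := fun j => w j * w j)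
          (fun j _ => mul_self_nonneg (w j)) (Finset.mem_univ i)
      rw [hw.2] at hsum
      constructor <;> nlinarith
    have hcompact : IsCompact sph := Metric.isCompact_of_isClosed_isBounded hclosed hbounded
    obtain ⟨w₁, hw₁mem, hw₁max⟩ := hcompact.exists_isMaxOn hsphne
      (dot_quad_continuous B).continuousOn
    set lam : ℝ := w₁ ⬝ᵥ (B *ᵥ w₁) with hlamdef
    rcases le_or_gt lam 0 with hlam | hlam
    · left
      intro u
      by_cases hw0 : S *ᵥ u = 0
      · rw [hw0]; simp
      · obtain ⟨c, hc, hc2, hmem, hval⟩ := hnorm (S *ᵥ u) ⟨u, rfl⟩ hw0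
        have h2 : (c⁻¹ • (S *ᵥ u)) ⬝ᵥ (B *ᵥ (c⁻¹ • (S *ᵥ u))) ≤ lam := hw₁max hmem
        rw [hval] at h2
        have hinv : 0 < c⁻¹ := inv_pos.2 hc
        nlinarith [h2, hlam, mul_pos hinv hinv]
    · right
      refine ⟨w₁, lam, hw₁mem.1, hw₁mem.2, rfl, hlam, ?_⟩
      intro u
      by_cases hw0 : S *ᵥ u = 0
      · rw [hw0]; simp
      · obtain ⟨c, hc, hc2, hmem, hval⟩ := hnorm (S *ᵥ u) ⟨u, rfl⟩ hw0
        have h2 : (c⁻¹ • (S *ᵥ u)) ⬝ᵥ (B *ᵥ (c⁻¹ • (S *ᵥ u))) ≤ lam := hw₁max hmem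
        rw [hval] at h2
        have hcc : 0 < c * c := mul_pos hc hc
        have h3 := mul_le_mul_of_nonneg_left h2 hcc.le
        have hski : c * c * (c⁻¹ * (c⁻¹ * ((S *ᵥ u) ⬝ᵥ (B *ᵥ (S *ᵥ u)))))
            = (S *ᵥ u) ⬝ᵥ (B *ᵥ (S *ᵥ u)) := by
          field_simp
        rw [hski] at h3
        calc (S *ᵥ u) ⬝ᵥ (B *ᵥ (S *ᵥ u)) ≤ c * c * lam := h3
          _ = lam * ((S *ᵥ u) ⬝ᵥ (S *ᵥ u)) := by rw [← hc2]; ring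
lemma step {n : ℕ} (L : Submodule ℝ (Matrix (Fin n) (Fin n) ℝ))
    (hLsymm : ∀ A ∈ L, A.IsSymm)
    (X : Matrix (Fin n) (Fin n) ℝ) (hXL : X ∈ L) (hX : X.PosSemidef)
    (hbig : n * (n + 1) + 4 ≤ X.rank * (X.rank + 1) + 2 * finrank ℝ L) :
    ∃ X' ∈ L, X' ≠ 0 ∧ X'.PosSemidef ∧ X'.rank < X.rank := by
  classical
  obtain ⟨S, hSpsd, hSS⟩ : ∃ S : Matrix (Fin n) (Fin n) ℝ, S.PosSemidef ∧ S * S = X := by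
    open scoped MatrixOrder in
    exact ⟨CFC.sqrt X, (CFC.sqrt_nonneg X).posSemidef, CFC.sqrt_mul_sqrt_self X hX.nonneg⟩
  have hSsymm : Sᵀ = S := by
    rw [← conjTranspose_eq_transpose_of_trivial]; exact hSpsd.1
  -- kernels of X and S agree
  have hkerXS : LinearMap.ker X.mulVecLin = LinearMap.ker S.mulVecLin := by
    ext u
    simp only [LinearMap.mem_ker, mulVecLin_apply]
    constructor
    · intro hu
      have h1 : (S *ᵥ u) ⬝ᵥ (S *ᵥ u) = 0 := by
        rw [← dot_symm hSsymm, Matrix.mulVec_mulVec, hSS, hu, dotProduct_zero]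
      exact dotProduct_self_eq_zero.1 h1
    · intro hu
      rw [← hSS, ← Matrix.mulVec_mulVec, hu, Matrix.mulVec_zero]
  set RS : Submodule ℝ (Fin n → ℝ) := LinearMap.range S.mulVecLin with hRSdef
  have hr : finrank ℝ RS = X.rank := by
    rw [hRSdef]
    have h1 := LinearMap.finrank_range_add_finrank_ker X.mulVecLin
    have h2 := LinearMap.finrank_range_add_finrank_ker S.mulVecLin
    have hrk : X.rank = finrank ℝ (LinearMap.range X.mulVecLin) := rfl
    rw [hkerXS] at h1
    omega
  set r : ℕ := finrank ℝ RS with hrdef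
  -- build the matrix V whose columns are a basis of RS
  let b : Basis (Fin r) ℝ RS := Module.finBasis ℝ RS
  set V : Matrix (Fin n) (Fin r) ℝ := Matrix.of fun i j => (b j : Fin n → ℝ) i with hVdef
  have hVmul : ∀ x : Fin r → ℝ, V *ᵥ x = ∑ j, x j • (b j : Fin n → ℝ) := by
    intro x
    funext i
    rw [Matrix.mulVec, dotProduct, Finset.sum_apply]
    refine Finset.sum_congr rfl fun j _ => ?_
    simp [hVdef, mul_comm]
  have hbli : LinearIndependent ℝ (fun j : Fin r => (b j : Fin n → ℝ)) :=
    b.linearIndependent.map' RS.subtype (Submodule.ker_subtype RS)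
  have hVinj : ∀ x, V *ᵥ x = 0 → x = 0 := by
    intro x hx
    rw [hVmul] at hx
    have := Fintype.linearIndependent_iff.1 hbli x hx
    funext j; exact this j
  -- V = S * V₀
  have hcols : ∀ j, ∃ w : Fin n → ℝ, S *ᵥ w = (b j : Fin n → ℝ) := fun j => (b j).2
  choose wv hwv using hcols
  set V₀ : Matrix (Fin n) (Fin r) ℝ := Matrix.of fun i j => wv j i with hV₀def
  have hSV₀ : S * V₀ = V := by
    ext i j
    simp only [Matrix.mul_apply, hVdef, hV₀def, Matrix.of_apply, ← hwv j, Matrix.mulVec,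
      dotProduct]
  -- the subspace W
  set W : Submodule ℝ (Matrix (Fin n) (Fin n) ℝ) := (symmSub n).map (conjMap S) with hWdef
  have hWle : W ≤ symmSub n := by
    rintro _ ⟨M, hM, rfl⟩
    show ((conjMap S) M).IsSymm
    show (S * M * Sᵀ)ᵀ = S * M * Sᵀ
    rw [Matrix.transpose_mul, Matrix.transpose_mul, Matrix.transpose_transpose,
      (hM : Mᵀ = M), hSsymm, Matrix.mul_assoc]
  have hXW : X ∈ W := by
    refine ⟨1, isSymm_one, ?_⟩
    show S * 1 * Sᵀ = X
    rw [Matrix.mul_one, hSsymm, hSS]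
  -- lower bound on dim W
  have hmemW : ∀ p : pairs r, conjMap V (symFam r p) ∈ W := by
    intro p
    refine ⟨V₀ * symFam r p * V₀ᵀ, ?_, ?_⟩
    · show (V₀ * symFam r p * V₀ᵀ)ᵀ = V₀ * symFam r p * V₀ᵀ
      rw [Matrix.transpose_mul, Matrix.transpose_mul, Matrix.transpose_transpose,
        (symFam_isSymm r p : (symFam r p)ᵀ = symFam r p), Matrix.mul_assoc]
    · show S * (V₀ * symFam r p * V₀ᵀ) * Sᵀ = V * symFam r p * Vᵀ
      rw [hSsymm]
      have hV₀S : V₀ᵀ * S = Vᵀ := by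
        rw [← hSV₀, Matrix.transpose_mul, hSsymm]
      calc S * (V₀ * symFam r p * V₀ᵀ) * S = (S * V₀) * symFam r p * (V₀ᵀ * S) := by
            simp only [Matrix.mul_assoc]
        _ = V * symFam r p * Vᵀ := by rw [hSV₀, hV₀S]
  have hcard : Fintype.card (pairs r) ≤ finrank ℝ W := by
    have hli : LinearIndependent ℝ (⇑(conjMap V) ∘ symFam r) :=
      (li_symFam r).map' (conjMap V) (conjMap_ker V hVinj)
    set F' : pairs r → W := fun p => ⟨conjMap V (symFam r p), hmemW p⟩ with hF'def
    have hF'li : LinearIndependent ℝ F' := by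
      apply LinearIndependent.of_comp W.subtype
      exact hli
    exact hF'li.fintype_card_le_finrank
  rw [card_pairs] at hcard
  -- dimension of the intersection
  have hLle : L ≤ symmSub n := fun A hA => hLsymm A hA
  have hsup : finrank ℝ ↥(W ⊔ L) ≤ n * (n + 1) / 2 :=
    le_trans (Submodule.finrank_mono (sup_le hWle hLle)) (finrank_symmSub_le n)
  have hformula := Submodule.finrank_sup_add_finrank_inf_eq W L
  obtain ⟨c1, hc1⟩ := Nat.even_mul_succ_self r
  obtain ⟨c2, hc2⟩ := Nat.even_mul_succ_self n
  rw [← hr] at hbig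
  have hinf : 2 ≤ finrank ℝ ↥(W ⊓ L) := by omega
  -- pick Y not proportional to X
  have hYex : ∃ Y ∈ W ⊓ L, Y ∉ Submodule.span ℝ {X} := by
    by_contra hcon
    push_neg at hcon
    have hle : W ⊓ L ≤ Submodule.span ℝ {X} := fun Y hY => hcon Y hY
    have h1 : finrank ℝ ↥(W ⊓ L) ≤ finrank ℝ ↥(Submodule.span ℝ ({X} : Set _)) :=
      Submodule.finrank_mono hle
    have h2 : finrank ℝ ↥(Submodule.span ℝ ({X} : Set (Matrix (Fin n) (Fin n) ℝ))) ≤ 1 := by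
      refine le_trans (finrank_span_le_card _) ?_
      simp
    omega
  obtain ⟨Y, hYWL, hYspan⟩ := hYex
  obtain ⟨hYW, hYL⟩ := Submodule.mem_inf.1 hYWL
  obtain ⟨B, hBsym, hBY⟩ := hYW
  have hYeq : S * B * S = Y := by
    have : S * B * Sᵀ = Y := hBY
    rwa [hSsymm] at this
  have hBsym' : Bᵀ = B := hBsym
  -- choose the right sign
  have key : ∃ B₁ : Matrix (Fin n) (Fin n) ℝ, B₁ᵀ = B₁ ∧ S * B₁ * S ∈ L ∧
      (S * B₁ * S ∉ Submodule.span ℝ ({X} : Set _)) ∧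
      ∃ (w₁ : Fin n → ℝ) (lam : ℝ), (w₁ ∈ LinearMap.range S.mulVecLin) ∧ w₁ ⬝ᵥ w₁ = 1 ∧
        w₁ ⬝ᵥ (B₁ *ᵥ w₁) = lam ∧ 0 < lam ∧
        ∀ u, (S *ᵥ u) ⬝ᵥ (B₁ *ᵥ (S *ᵥ u)) ≤ lam * ((S *ᵥ u) ⬝ᵥ (S *ᵥ u)) := by
    rcases sphere_max S B with h1 | h1
    · rcases sphere_max S (-B) with h2 | h2
      · exfalso
        -- Y = 0, contradiction with hYspan
        have hzero : ∀ u, (S *ᵥ u) ⬝ᵥ (B *ᵥ (S *ᵥ u)) = 0 := by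
          intro u
          have ha := h1 u
          have hb := h2 u
          rw [Matrix.neg_mulVec, dotProduct_neg] at hb
          linarith
        have hpolar : ∀ x y : Fin n → ℝ, (S *ᵥ x) ⬝ᵥ (B *ᵥ (S *ᵥ y)) = 0 := by
          intro x y
          have hxy := hzero (x + y)
          have hx := hzero x
          have hy := hzero y
          rw [Matrix.mulVec_add, Matrix.mulVec_add, dotProduct_add, add_dotProduct,
            add_dotProduct] at hxy
          have hsymm2 : (S *ᵥ y) ⬝ᵥ (B *ᵥ (S *ᵥ x)) = (S *ᵥ x) ⬝ᵥ (B *ᵥ (S *ᵥ y)) := by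
            rw [dot_symm hBsym', dotProduct_comm]
          rw [hx, hy, hsymm2] at hxy
          linarith
        have hY0 : Y = 0 := by
          have hmv : ∀ y, Y *ᵥ y = 0 := by
            intro y
            have h3 : ∀ x, x ⬝ᵥ (Y *ᵥ y) = 0 := by
              intro x
              rw [← hYeq]
              have : (S * B * S) *ᵥ y = S *ᵥ (B *ᵥ (S *ᵥ y)) := by
                rw [Matrix.mulVec_mulVec, Matrix.mulVec_mulVec]
              rw [this, dot_symm hSsymm]
              exact hpolar x y
            have := h3 (Y *ᵥ y)
            exact dotProduct_self_eq_zero.1 this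
          ext i j
          have := congrFun (hmv (Pi.single j 1)) i
          rw [Matrix.mulVec_single] at this
          simpa using this
        exact hYspan (hY0 ▸ Submodule.zero_mem _)
      · refine ⟨-B, by rw [Matrix.transpose_neg, hBsym'], ?_, ?_, h2⟩
        · have : S * (-B) * S = -Y := by
            rw [← hYeq, Matrix.mul_neg, Matrix.neg_mul]
          rw [this]
          exact Submodule.neg_mem L hYL
        · have heq : S * (-B) * S = -Y := by
            rw [← hYeq, Matrix.mul_neg, Matrix.neg_mul]
          rw [heq]
          intro hmem
          exact hYspan (by simpa using Submodule.neg_mem _ hmem)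
    · exact ⟨B, hBsym', hYeq ▸ hYL, hYeq ▸ hYspan, h1⟩
  obtain ⟨B₁, hB₁symm, hB₁L, hB₁span, w₁, lam, hw₁RS, hw₁n, hw₁B, hlam, hmax⟩ := key
  obtain ⟨u₀, hu₀⟩ := hw₁RS
  rw [mulVecLin_apply] at hu₀
  obtain ⟨hpsd, hker⟩ := reduce S B₁ hSpsd hSsymm hB₁symm w₁ u₀ hu₀ hw₁n lam hlam hmax hw₁B
  rw [hSS] at hpsd hker
  refine ⟨X - lam⁻¹ • (S * B₁ * S), ?_, ?_, hpsd, ?_⟩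
  · exact Submodule.sub_mem L hXL (Submodule.smul_mem L _ hB₁L)
  · intro h0
    apply hB₁span
    rw [Submodule.mem_span_singleton]
    refine ⟨lam, ?_⟩
    have hXeq : X = lam⁻¹ • (S * B₁ * S) := by rwa [sub_eq_zero] at h0
    rw [hXeq, smul_smul, mul_inv_cancel₀ hlam.ne', one_smul]
  · have h1 := LinearMap.finrank_range_add_finrank_ker X.mulVecLin
    have h2 := LinearMap.finrank_range_add_finrank_ker (X - lam⁻¹ • (S * B₁ * S)).mulVecLin
    have hklt : finrank ℝ (LinearMap.ker X.mulVecLin)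
        < finrank ℝ (LinearMap.ker (X - lam⁻¹ • (S * B₁ * S)).mulVecLin) :=
      Submodule.finrank_lt_finrank_of_lt hker
    have hrk1 : X.rank = finrank ℝ (LinearMap.range X.mulVecLin) := rfl
    have hrk2 : (X - lam⁻¹ • (S * B₁ * S)).rank
        = finrank ℝ (LinearMap.range (X - lam⁻¹ • (S * B₁ * S)).mulVecLin) := rfl
    rw [Module.finrank_pi, Fintype.card_fin] at h1 h2
    omega
end Stmt2Aux

open Stmt2Aux

theorem stmt2 (n d m : ℕ) (hn : 2 ≤ n) (hd1 : 1 ≤ d) (hdn : d ≤ n - 1)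
    (L : Submodule ℝ (Matrix (Fin n) (Fin n) ℝ)) (hLsymm : ∀ A ∈ L, A.IsSymm)
    (hLpd : ∃ K ∈ L, K.PosDef)
    (hdim : Module.finrank ℝ L = m)
    (hm : (d : ℤ) * n - d * (d - 1) / 2 - n + d + 1 ≤ (m : ℤ)) :
    ∃ Ω ∈ L, Ω ≠ 0 ∧ Ω.PosSemidef ∧ Ω.rank ≤ n - d := by
  classical
  obtain ⟨K, hKL, hKpd⟩ := hLpd
  have hdn' : d ≤ n := le_trans hdn (Nat.sub_le n 1)
  -- arithmetic: the dimension condition kicks in whenever the rank is too big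
  have harith : ∀ R : ℕ, n - d + 1 ≤ R → n * (n + 1) + 4 ≤ R * (R + 1) + 2 * m := by
    intro R hR
    have hdiv : ((d : ℤ) * (d - 1)) = 2 * ((d : ℤ) * (d - 1) / 2) := by
      obtain ⟨c, hc⟩ := Int.even_mul_succ_self ((d : ℤ) - 1)
      have h1 : (d : ℤ) * (d - 1) = c + c := by rw [← hc]; ring
      omega
    have hm2 : 2 * ((d : ℤ) * n) - d * (d - 1) - 2 * n + 2 * d + 2 ≤ 2 * m := by
      omega
    have hRZ : ((n : ℤ) - d + 1) ≤ (R : ℤ) := by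
      have := hR
      zify at this
      rwa [Nat.cast_sub hdn'] at this
    have hd1' : (1 : ℤ) ≤ (d : ℤ) := by exact_mod_cast hd1
    have hdn2 : (d : ℤ) + 1 ≤ (n : ℤ) := by
      have : d + 1 ≤ n := by omega
      exact_mod_cast this
    have key : ((n : ℤ)) * (n + 1) + 4 ≤ (R : ℤ) * (R + 1) + 2 * m := by
      nlinarith [mul_nonneg (by linarith : (0:ℤ) ≤ (R : ℤ) - ((n : ℤ) - d + 1))
        (by linarith : (0:ℤ) ≤ (R : ℤ) + ((n : ℤ) - d + 1) + 1), hm2]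
    exact_mod_cast key
  have hK0 : K ≠ 0 := by
    intro h
    have hxne : (Pi.single (⟨0, by omega⟩ : Fin n) (1 : ℝ) : Fin n → ℝ) ≠ 0 := by
      intro hx
      have := congrFun hx ⟨0, by omega⟩
      simp at this
    have hpos := hKpd.dotProduct_mulVec_pos hxne
    rw [h] at hpos
    simp at hpos
  have main : ∀ k (X : Matrix (Fin n) (Fin n) ℝ), X ∈ L → X ≠ 0 → X.PosSemidef →
      X.rank ≤ k → ∃ Ω ∈ L, Ω ≠ 0 ∧ Ω.PosSemidef ∧ Ω.rank ≤ n - d := by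
    intro k
    induction k with
    | zero => intro X hXL hX0 hXpsd hr; exact ⟨X, hXL, hX0, hXpsd, by omega⟩
    | succ k ih =>
      intro X hXL hX0 hXpsd hr
      by_cases hcase : X.rank ≤ n - d
      · exact ⟨X, hXL, hX0, hXpsd, hcase⟩
      · have hbig : n * (n + 1) + 4 ≤ X.rank * (X.rank + 1) + 2 * Module.finrank ℝ L := by
          rw [hdim]
          exact harith X.rank (by omega)
        obtain ⟨X', hX'L, hX'0, hX'psd, hX'lt⟩ := step L hLsymm X hXL hXpsd hbig
        exact ih X' hX'L hX'0 hX'psd (by omega)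
  exact main K.rank K hKL hK0 hKpd.posSemidef le_rfl
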